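/- arXiv:1909.04997 — 3 statements merged into one kernel-verified Lean document; each statement's English description precedes it below -/
import Mathlib

section
/- Let 𝒞₁, …, 𝒞_{d+1} be finite families of convex bodies in ℝ^d, and let L be a convex body in ℝ^d. Assume that for every colorful selection C₁ ∈ 𝒞₁, …, C_{d+1} ∈ 𝒞_{d+1}, the intersection ⋂_{i=1}^{d+1} C_i contains a translate of L. Then there exists an index j such that the intersection ⋂_{C ∈ 𝒞_j} C contains a translate of L. -/
open MeasureTheory

/-- A convex body: a compact convex set with nonempty interior. -/
def IsConvexBody {d : ℕ} (K : Set (EuclideanSpace ℝ (Fin d))) : Prop :=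
  Convex ℝ K ∧ IsCompact K ∧ (interior K).Nonempty

section Aux

variable {d : ℕ}

/-- View a point of Euclidean space as a plain function (definitionally the identity). -/
noncomputable def toPi (x : EuclideanSpace ℝ (Fin d)) : Fin d → ℝ := x

/-- The set of points of `A` minimizing the `i`-th coordinate. -/
def coordMinSet (A : Set (EuclideanSpace ℝ (Fin d))) (i : Fin d) :
    Set (EuclideanSpace ℝ (Fin d)) :=
  {x ∈ A | ∀ y ∈ A, toPi x i ≤ toPi y i}

lemma coordMinSet_compact {A : Set (EuclideanSpace ℝ (Fin d))} (hA : IsCompact A)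
    (hne : A.Nonempty) (i : Fin d) :
    IsCompact (coordMinSet A i) ∧ (coordMinSet A i).Nonempty := by
  have hcont : Continuous fun x : EuclideanSpace ℝ (Fin d) => toPi x i :=
    (continuous_apply i).comp (PiLp.continuous_ofLp (p := 2) (β := fun _ : Fin d => ℝ))
  constructor
  · have : coordMinSet A i = A ∩ ⋂ y ∈ A, {x | toPi x i ≤ toPi y i} := by
      ext x; simp [coordMinSet, Set.mem_iInter]
    rw [this]
    exact hA.inter_right (isClosed_biInter fun y _ => isClosed_le hcont continuous_const)
  · obtain ⟨x, hxA, hx⟩ := hA.exists_isMinOn hne hcont.continuousOn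
    exact ⟨x, hxA, fun y hy => hx hy⟩

/-- Iterated coordinate minimization. -/
def iterMin (K : Set (EuclideanSpace ℝ (Fin d))) : ℕ → Set (EuclideanSpace ℝ (Fin d))
  | 0 => K
  | (n + 1) => if h : n < d then coordMinSet (iterMin K n) ⟨n, h⟩ else iterMin K n

lemma iterMin_step (K : Set (EuclideanSpace ℝ (Fin d))) (n : ℕ) :
    iterMin K (n + 1) ⊆ iterMin K n := by
  rw [iterMin]
  by_cases h : n < d
  · rw [dif_pos h]; exact fun x hx => hx.1
  · rw [dif_neg h]

lemma iterMin_mono (K : Set (EuclideanSpace ℝ (Fin d))) {k n : ℕ} (h : k ≤ n) :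
    iterMin K n ⊆ iterMin K k := by
  induction n, h using Nat.le_induction with
  | base => exact Set.Subset.rfl
  | succ n hn ih => exact (iterMin_step K n).trans ih

lemma iterMin_compact {K : Set (EuclideanSpace ℝ (Fin d))} (hK : IsCompact K)
    (hne : K.Nonempty) (n : ℕ) : IsCompact (iterMin K n) ∧ (iterMin K n).Nonempty := by
  induction n with
  | zero => exact ⟨hK, hne⟩
  | succ n ih =>
    rw [iterMin]
    by_cases h : n < d
    · rw [dif_pos h]; exact coordMinSet_compact ih.1 ih.2 _
    · rw [dif_neg h]; exact ih

lemma mem_iterMin_of_agree {K : Set (EuclideanSpace ℝ (Fin d))} :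
    ∀ k, ∀ x ∈ iterMin K k, ∀ y ∈ K, (∀ j : Fin d, (j : ℕ) < k → toPi y j = toPi x j) →
      y ∈ iterMin K k := by
  intro k
  induction k with
  | zero => exact fun x _ y hy _ => hy
  | succ k ih =>
    intro x hx y hy hagree
    rw [iterMin] at hx ⊢
    by_cases h : k < d
    · rw [dif_pos h] at hx ⊢
      refine ⟨ih x hx.1 y hy fun j hj => hagree j (hj.trans (Nat.lt_succ_self k)), ?_⟩
      intro z hz
      have : toPi y ⟨k, h⟩ = toPi x ⟨k, h⟩ := hagree ⟨k, h⟩ (Nat.lt_succ_self k)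
      rw [this]
      exact hx.2 z hz
    · rw [dif_neg h] at hx ⊢
      exact ih x hx y hy fun j hj => hagree j (Nat.lt_succ_of_lt hj)

/-- Existence of a lexicographic minimum on a nonempty compact set. -/
lemma lexmin_exists {K : Set (EuclideanSpace ℝ (Fin d))} (hK : IsCompact K)
    (hne : K.Nonempty) :
    ∃ v ∈ K, ∀ y ∈ K, ¬ toLex (toPi y) < toLex (toPi v) := by
  obtain ⟨v, hv⟩ := (iterMin_compact hK hne d).2
  refine ⟨v, iterMin_mono K (Nat.zero_le d) hv, ?_⟩
  rintro y hy ⟨i, hagree, hlt⟩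
  have hyi : y ∈ iterMin K (i : ℕ) :=
    mem_iterMin_of_agree (i : ℕ) v (iterMin_mono K (Nat.le_of_lt i.isLt) hv) y hy
      (fun j hj => hagree j hj)
  have hvi : v ∈ iterMin K ((i : ℕ) + 1) := iterMin_mono K i.isLt hv
  rw [iterMin, dif_pos i.isLt] at hvi
  have := hvi.2 y hyi
  rw [Fin.eta] at this
  exact absurd hlt (not_lt.mpr this)

end Aux

section Aux2

/-- The lexicographic linear order on `Fin d → ℝ`. -/
noncomputable instance lexLinearOrder (d : ℕ) : LinearOrder (Lex (Fin d → ℝ)) :=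
  @Pi.Lex.linearOrder (Fin d) (fun _ => ℝ) _
    (Finite.to_wellFoundedLT) _

variable {d : ℕ}

lemma toPi_combo (a b : ℝ) (x y : EuclideanSpace ℝ (Fin d)) (l : Fin d) :
    toPi (a • x + b • y) l = a * toPi x l + b * toPi y l := rfl

/-- The set of points lexicographically below `v` is convex. -/
lemma convex_lex_lt (v : EuclideanSpace ℝ (Fin d)) :
    Convex ℝ {x : EuclideanSpace ℝ (Fin d) | toLex (toPi x) < toLex (toPi v)} := by
  intro x hx y hy a b ha hb hab
  rcases ha.eq_or_lt with rfl | ha'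
  · have hb1 : b = 1 := by linarith
    subst hb1
    simpa using hy
  rcases hb.eq_or_lt with rfl | hb'
  · have ha1 : a = 1 := by linarith
    subst ha1
    simpa using hx
  obtain ⟨i, hxa, hxl⟩ := hx
  obtain ⟨j, hya, hyl⟩ := hy
  refine Set.mem_setOf.mpr ⟨min i j, ?_, ?_⟩
  · intro l hl
    have h1 : toPi x l = toPi v l := hxa l (lt_of_lt_of_le hl (min_le_left i j))
    have h2 : toPi y l = toPi v l := hya l (lt_of_lt_of_le hl (min_le_right i j))
    show toPi (a • x + b • y) l = toPi v l
    rw [toPi_combo, h1, h2]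
    have : a * toPi v l + b * toPi v l = (a + b) * toPi v l := by ring
    rw [this, hab, one_mul]
  · set k := min i j with hk
    have hxk : toPi x k ≤ toPi v k := by
      rcases lt_or_eq_of_le (min_le_left i j) with hlt | heq
      · exact (hxa k hlt).le
      · rw [hk, heq] at *; exact hxl.le
    have hyk : toPi y k ≤ toPi v k := by
      rcases lt_or_eq_of_le (min_le_right i j) with hlt | heq
      · exact (hya k hlt).le
      · rw [hk, heq] at *; exact hyl.le
    have hstrict : toPi x k < toPi v k ∨ toPi y k < toPi v k := by
      rcases min_cases i j with ⟨hmin, _⟩ | ⟨hmin, _⟩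
      · left; rw [hk, hmin]; exact hxl
      · right; rw [hk, hmin]; exact hyl
    show toPi (a • x + b • y) k < toPi v k
    rw [toPi_combo]
    have hv : toPi v k = a * toPi v k + b * toPi v k := by
      have : a * toPi v k + b * toPi v k = (a + b) * toPi v k := by ring
      rw [this, hab, one_mul]
    rw [hv]
    rcases hstrict with hs | hs
    · have h1 : a * toPi x k < a * toPi v k := mul_lt_mul_of_pos_left hs ha'
      have h2 : b * toPi y k ≤ b * toPi v k := mul_le_mul_of_nonneg_left hyk hb
      linarith
    · have h1 : a * toPi x k ≤ a * toPi v k := mul_le_mul_of_nonneg_left hxk ha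
      have h2 : b * toPi y k < b * toPi v k := mul_lt_mul_of_pos_left hs hb'
      linarith

/-- Drop-one lemma: a lex-minimum of an intersection of `d+1` convex sets in `ℝᵈ` is
already a lex-minimum of the intersection of `d` of them. -/
lemma drop_one {C : Fin (d + 1) → Set (EuclideanSpace ℝ (Fin d))}
    (hconv : ∀ i, Convex ℝ (C i)) (v : EuclideanSpace ℝ (Fin d))
    (hv : ∀ i, v ∈ C i)
    (hmin : ∀ y, (∀ i, y ∈ C i) → ¬ toLex (toPi y) < toLex (toPi v)) :
    ∃ j, ∀ y, (∀ k, k ≠ j → y ∈ C k) → ¬ toLex (toPi y) < toLex (toPi v) := by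
  classical
  set D : Set (EuclideanSpace ℝ (Fin d)) :=
    {x | toLex (toPi x) < toLex (toPi v)} with hD
  set f : Fin (d + 2) → Set (EuclideanSpace ℝ (Fin d)) := Fin.cons D C with hf
  have hfconv : ∀ i, Convex ℝ (f i) := by
    intro i
    refine Fin.cases ?_ ?_ i
    · exact convex_lex_lt v
    · intro k; exact hconv k
  have hempty : ¬ (⋂ i ∈ (Finset.univ : Finset (Fin (d + 2))), f i).Nonempty := by
    rintro ⟨y, hy⟩
    simp only [Set.mem_iInter] at hy
    have hyD : y ∈ D := hy 0 (Finset.mem_univ _)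
    have hyC : ∀ i, y ∈ C i := fun i => hy i.succ (Finset.mem_univ _)
    exact hmin y hyC hyD
  -- contrapositive of Helly
  have hhelly := fun hint => Convex.helly_theorem' (𝕜 := ℝ)
    (F := f) (s := Finset.univ) (fun i _ => hfconv i) hint
  have : ∃ I : Finset (Fin (d + 2)), I ⊆ Finset.univ ∧
      I.card ≤ Module.finrank ℝ (EuclideanSpace ℝ (Fin d)) + 1 ∧
      ¬ (⋂ i ∈ I, f i).Nonempty := by
    by_contra hcon
    push_neg at hcon
    exact hempty (hhelly fun I hI hIcard => hcon I hI hIcard)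
  obtain ⟨I, -, hIcard, hIempty⟩ := this
  rw [finrank_euclideanSpace_fin] at hIcard
  -- 0 must belong to I
  have h0I : (0 : Fin (d + 2)) ∈ I := by
    by_contra h0
    refine hIempty ⟨v, ?_⟩
    simp only [Set.mem_iInter]
    intro i hi
    have hi0 : i ≠ 0 := fun h => h0 (h ▸ hi)
    obtain ⟨k, rfl⟩ := Fin.exists_succ_eq.mpr hi0
    exact hv k
  -- some index is missing from I
  have : ∃ i₀ : Fin (d + 2), i₀ ∉ I := by
    by_contra hall
    push_neg at hall
    have : I = Finset.univ := Finset.eq_univ_iff_forall.mpr hall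
    rw [this, Finset.card_univ, Fintype.card_fin] at hIcard
    omega
  obtain ⟨i₀, hi₀⟩ := this
  have hi₀0 : i₀ ≠ 0 := fun h => hi₀ (h ▸ h0I)
  obtain ⟨j, rfl⟩ := Fin.exists_succ_eq.mpr hi₀0
  refine ⟨j, ?_⟩
  intro y hy hylt
  refine hIempty ⟨y, ?_⟩
  simp only [Set.mem_iInter]
  intro i hi
  rcases Fin.eq_zero_or_eq_succ i with rfl | ⟨k, rfl⟩
  · exact hylt
  · have hkj : k ≠ j := fun h => hi₀ (h ▸ hi)
    exact hy k hkj

end Aux2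

/-- Colorful Helly Theorem for translates of a fixed convex body. -/
theorem colorful_helly_translates {d : ℕ}
    (𝒞 : Fin (d + 1) → Finset (Set (EuclideanSpace ℝ (Fin d))))
    (hbody : ∀ i, ∀ S ∈ 𝒞 i, IsConvexBody S)
    (L : Set (EuclideanSpace ℝ (Fin d))) (hL : IsConvexBody L)
    (h : ∀ C : Fin (d + 1) → Set (EuclideanSpace ℝ (Fin d)),
      (∀ i, C i ∈ 𝒞 i) →
      ∃ t : EuclideanSpace ℝ (Fin d), (fun x => x + t) '' L ⊆ ⋂ i, C i) :
    ∃ j, ∃ t : EuclideanSpace ℝ (Fin d), (fun x => x + t) '' L ⊆ ⋂ S ∈ 𝒞 j, S := by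
  classical
  -- trivial case: some family is empty
  by_cases hemp : ∃ j, 𝒞 j = ∅
  · obtain ⟨j, hj⟩ := hemp
    exact ⟨j, 0, by simp [hj]⟩
  push_neg at hemp
  obtain ⟨x₀, hx₀⟩ : L.Nonempty := hL.2.2.mono interior_subset
  -- the erosion of `C` by `L`: translation vectors `t` with `L + t ⊆ C`
  set T : Set (EuclideanSpace ℝ (Fin d)) → Set (EuclideanSpace ℝ (Fin d)) :=
    fun C => {t | ∀ x ∈ L, x + t ∈ C} with hT
  have hTconv : ∀ C, Convex ℝ C → Convex ℝ (T C) := by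
    intro C hC t₁ ht₁ t₂ ht₂ a b ha hb hab x hx
    have key : x + (a • t₁ + b • t₂) = a • (x + t₁) + b • (x + t₂) := by
      rw [smul_add, smul_add, add_add_add_comm, Convex.combo_self hab]
    rw [Set.mem_setOf_eq] at ht₁ ht₂
    show x + (a • t₁ + b • t₂) ∈ C
    rw [key]
    exact hC (ht₁ x hx) (ht₂ x hx) ha hb hab
  have hTclosed : ∀ C, IsCompact C → IsClosed (T C) := by
    intro C hC
    have : T C = ⋂ x ∈ L, (fun t => x + t) ⁻¹' C := by
      ext t; simp [hT]
    rw [this]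
    exact isClosed_biInter fun x _ => hC.isClosed.preimage (continuous_add_left x)
  have hTcompact : ∀ C, IsCompact C → IsCompact (T C) := by
    intro C hC
    have himg : IsCompact ((fun c => c - x₀) '' C) :=
      hC.image (continuous_id.sub continuous_const)
    refine IsCompact.of_isClosed_subset himg (hTclosed C hC) ?_
    intro t ht
    exact ⟨x₀ + t, ht x₀ hx₀, by simp⟩
  -- selections
  set Sel : Set (Fin (d + 1) → Set (EuclideanSpace ℝ (Fin d))) :=
    {σ | ∀ i, σ i ∈ 𝒞 i} with hSel
  have hSelfin : Sel.Finite := by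
    have : Sel ⊆ Set.pi Set.univ (fun i => ((𝒞 i : Finset _) : Set (Set _))) := by
      intro σ hσ i _
      exact hσ i
    exact (Set.Finite.pi fun i => (𝒞 i).finite_toSet).subset this
  have hSelne : Sel.Nonempty := by
    refine ⟨fun i => (hemp i).choose, fun i => ?_⟩
    exact (hemp i).choose_spec
  -- intersections of erosions along a selection
  have hKne : ∀ σ ∈ Sel, (⋂ i, T (σ i)).Nonempty := by
    intro σ hσ
    obtain ⟨t, ht⟩ := h σ hσ
    refine ⟨t, Set.mem_iInter.mpr fun i x hx => ?_⟩
    have : x + t ∈ ⋂ i, σ i := ht ⟨x, hx, rfl⟩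
    exact Set.mem_iInter.mp this i
  have hKcompact : ∀ σ ∈ Sel, IsCompact (⋂ i, T (σ i)) := by
    intro σ hσ
    refine IsCompact.of_isClosed_subset (hTcompact _ (hbody 0 _ (hσ 0)).2.1)
      (isClosed_iInter fun i => hTclosed _ (hbody i _ (hσ i)).2.1)
      (Set.iInter_subset _ 0)
  -- lex-minimal points of those intersections
  have hm : ∀ σ : Fin (d + 1) → Set (EuclideanSpace ℝ (Fin d)), ∃ v, σ ∈ Sel →
      v ∈ (⋂ i, T (σ i)) ∧ ∀ y ∈ (⋂ i, T (σ i)), ¬ toLex (toPi y) < toLex (toPi v) := by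
    intro σ
    by_cases hσ : σ ∈ Sel
    · obtain ⟨v, hv1, hv2⟩ := lexmin_exists (hKcompact σ hσ) (hKne σ hσ)
      exact ⟨v, fun _ => ⟨hv1, hv2⟩⟩
    · exact ⟨0, fun hc => absurd hc hσ⟩
  choose m hm using hm
  -- pick the selection with lex-maximal minimum
  obtain ⟨σs, hσs, hmax⟩ := Set.exists_max_image (β := Lex (Fin d → ℝ)) Sel (fun σ => toLex (toPi (m σ))) hSelfin hSelne
  obtain ⟨hv1, hv2⟩ := hm σs hσs
  set v := m σs with hvdef
  -- drop one color
  obtain ⟨j, hj⟩ := drop_one (C := fun i => T (σs i))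
    (fun i => hTconv _ (hbody i _ (hσs i)).1) v
    (fun i => Set.mem_iInter.mp hv1 i)
    (fun y hy => hv2 y (Set.mem_iInter.mpr hy))
  refine ⟨j, v, ?_⟩
  have hkey : ∀ C ∈ 𝒞 j, v ∈ T C := by
    intro C hC
    set σ' := Function.update σs j C with hσ'
    have hσ'Sel : σ' ∈ Sel := by
      intro i
      by_cases hij : i = j
      · subst hij; rw [hσ', Function.update_self]; exact hC
      · rw [hσ', Function.update_of_ne hij]; exact hσs i
    obtain ⟨hw1, hw2⟩ := hm σ' hσ'Sel
    set w := m σ' with hwdef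
    have hwk : ∀ k, k ≠ j → w ∈ T (σs k) := by
      intro k hk
      have := Set.mem_iInter.mp hw1 k
      rwa [hσ', Function.update_of_ne hk] at this
    have hle1 := not_lt.mp (hj w hwk)
    have hle2 := hmax σ' hσ'Sel
    have hvw : v = w := by
      have : toLex (toPi w) = toLex (toPi v) := le_antisymm hle2 hle1
      have h2 : toPi w = toPi v := toLex.injective this
      exact (WithLp.ofLp_injective 2 h2).symm
    have : w ∈ T (σ' j) := Set.mem_iInter.mp hw1 j
    rw [hσ', Function.update_self] at this
    rwa [hvw]
  rintro _ ⟨x, hx, rfl⟩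
  exact Set.mem_iInter₂.mpr fun C hC => hkey C hC x hx
end

section
/- Let C be a convex set in ℝ^d such that the closed Euclidean unit ball B^d is the ellipsoid of largest volume contained in C. Let E ⊆ C be an ellipsoid of volume at least δ · ω_d, where 0 < δ < 1 and ω_d = Vol(B^d). Then E contains a translate of the ball (δ / d^{d−1}) · B^d. -/
open MeasureTheory Finset Pointwise

/-- An ellipsoid in `ℝ^d`: the image of the closed Euclidean unit ball under an
invertible affine map. -/
def IsEllipsoid {d : ℕ} (E : Set (EuclideanSpace ℝ (Fin d))) : Prop :=
  ∃ L : EuclideanSpace ℝ (Fin d) ≃ᵃ[ℝ] EuclideanSpace ℝ (Fin d),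
    E = L '' Metric.closedBall 0 1

variable {d : ℕ}

noncomputable def Dmap (b : OrthonormalBasis (Fin d) ℝ (EuclideanSpace ℝ (Fin d)))
    (r : Fin d → ℝ) : EuclideanSpace ℝ (Fin d) →ₗ[ℝ] EuclideanSpace ℝ (Fin d) where
  toFun x := b.repr.symm (WithLp.toLp 2 (fun i => r i * b.repr x i))
  map_add' x y := by
    show b.repr.symm _ = b.repr.symm _ + b.repr.symm _
    rw [← map_add]
    congr 1
    apply PiLp.ext
    intro i
    simp [mul_add]
  map_smul' c x := by
    show b.repr.symm _ = c • b.repr.symm _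
    rw [← _root_.map_smul]
    congr 1
    apply PiLp.ext
    intro i
    simp
    ring

lemma Dmap_repr (b : OrthonormalBasis (Fin d) ℝ (EuclideanSpace ℝ (Fin d)))
    (r : Fin d → ℝ) (x : EuclideanSpace ℝ (Fin d)) (i : Fin d) :
    b.repr (Dmap b r x) i = r i * b.repr x i := by
  simp [Dmap]

lemma Dmap_eq_of (b : OrthonormalBasis (Fin d) ℝ (EuclideanSpace ℝ (Fin d)))
    {r s : Fin d → ℝ} (h : ∀ i, r i = s i) : Dmap b r = Dmap b s := by
  have : r = s := funext h
  rw [this]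

lemma Dmap_injective (b : OrthonormalBasis (Fin d) ℝ (EuclideanSpace ℝ (Fin d)))
    {x y : EuclideanSpace ℝ (Fin d)} (h : ∀ i, b.repr x i = b.repr y i) : x = y := by
  apply b.repr.injective
  apply PiLp.ext
  intro i
  exact h i

lemma Dmap_comp (b : OrthonormalBasis (Fin d) ℝ (EuclideanSpace ℝ (Fin d)))
    (r s : Fin d → ℝ) (x : EuclideanSpace ℝ (Fin d)) :
    Dmap b r (Dmap b s x) = Dmap b (fun i => r i * s i) x :=
  Dmap_injective b fun i => by simp [Dmap_repr, mul_assoc]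

lemma Dmap_one (b : OrthonormalBasis (Fin d) ℝ (EuclideanSpace ℝ (Fin d)))
    (x : EuclideanSpace ℝ (Fin d)) : Dmap b (fun _ => 1) x = x :=
  Dmap_injective b fun i => by simp [Dmap_repr]

open RealInnerProductSpace in
lemma inner_repr (b : OrthonormalBasis (Fin d) ℝ (EuclideanSpace ℝ (Fin d)))
    (x y : EuclideanSpace ℝ (Fin d)) :
    ⟪x, y⟫ = ∑ i, b.repr x i * b.repr y i := by
  rw [← b.repr.inner_map_map x y, PiLp.inner_apply]
  simp [RCLike.inner_apply]
  exact Finset.sum_congr rfl fun _ _ => mul_comm _ _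

lemma Dmap_det (b : OrthonormalBasis (Fin d) ℝ (EuclideanSpace ℝ (Fin d)))
    (r : Fin d → ℝ) : LinearMap.det (Dmap b r) = ∏ i, r i := by
  rw [← LinearMap.det_toMatrix b.toBasis]
  have h : LinearMap.toMatrix b.toBasis b.toBasis (Dmap b r) = Matrix.diagonal r := by
    ext i j
    rw [LinearMap.toMatrix_apply, OrthonormalBasis.coe_toBasis,
      OrthonormalBasis.coe_toBasis_repr_apply, Dmap_repr, OrthonormalBasis.repr_self]
    by_cases hij : i = j
    · subst hij; simp [Matrix.diagonal_apply, EuclideanSpace.single_apply]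
    · simp [Matrix.diagonal_apply, EuclideanSpace.single_apply, hij, Ne.symm hij]
  rw [h, Matrix.det_diagonal]

lemma Dmap_linear_comb (b : OrthonormalBasis (Fin d) ℝ (EuclideanSpace ℝ (Fin d)))
    (σ : Fin d → ℝ) (lam : ℝ) (x : EuclideanSpace ℝ (Fin d)) :
    lam • x + (1 - lam) • Dmap b σ x = Dmap b (fun i => lam + (1 - lam) * σ i) x :=
  Dmap_injective b fun i => by
    simp [Dmap_repr, PiLp.add_apply, PiLp.smul_apply]
    ring

noncomputable def Dequiv (b : OrthonormalBasis (Fin d) ℝ (EuclideanSpace ℝ (Fin d)))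
    (r : Fin d → ℝ) (hr : ∀ i, r i ≠ 0) :
    EuclideanSpace ℝ (Fin d) ≃ₗ[ℝ] EuclideanSpace ℝ (Fin d) :=
  LinearEquiv.ofLinear (Dmap b r) (Dmap b fun i => (r i)⁻¹)
    (LinearMap.ext fun x => by
      simp only [LinearMap.comp_apply, LinearMap.id_apply, Dmap_comp]
      rw [Dmap_eq_of b (s := fun _ => 1) (fun i => mul_inv_cancel₀ (hr i)), Dmap_one])
    (LinearMap.ext fun x => by
      simp only [LinearMap.comp_apply, LinearMap.id_apply, Dmap_comp]
      rw [Dmap_eq_of b (s := fun _ => 1) (fun i => inv_mul_cancel₀ (hr i)), Dmap_one])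

lemma Dequiv_apply (b : OrthonormalBasis (Fin d) ℝ (EuclideanSpace ℝ (Fin d)))
    (r : Fin d → ℝ) (hr : ∀ i, r i ≠ 0) (x : EuclideanSpace ℝ (Fin d)) :
    Dequiv b r hr x = Dmap b r x := rfl

set_option maxHeartbeats 4000000 in
/-- If `B^d` is the largest-volume ellipsoid contained in a convex set `C`, then
any ellipsoid `E ⊆ C` of volume at least `δ · ω_d` contains a translate of the
ball `(δ / d^(d-1)) · B^d`. -/
theorem ellipsoid_contains_small_ball {d : ℕ}
    (C : Set (EuclideanSpace ℝ (Fin d))) (hC : Convex ℝ C)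
    (hball : Metric.closedBall (0 : EuclideanSpace ℝ (Fin d)) 1 ⊆ C)
    (hmax : ∀ F, IsEllipsoid F → F ⊆ C →
      volume F ≤ volume (Metric.closedBall (0 : EuclideanSpace ℝ (Fin d)) 1))
    (δ : ℝ) (hδ0 : 0 < δ) (hδ1 : δ < 1)
    (E : Set (EuclideanSpace ℝ (Fin d))) (hE : IsEllipsoid E) (hEC : E ⊆ C)
    (hvol : ENNReal.ofReal δ *
        volume (Metric.closedBall (0 : EuclideanSpace ℝ (Fin d)) 1) ≤ volume E) :
    ∃ t : EuclideanSpace ℝ (Fin d),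
      Metric.closedBall t (δ / (d : ℝ) ^ (d - 1)) ⊆ E := by
  obtain ⟨L, hL⟩ := hE
  set B := Metric.closedBall (0 : EuclideanSpace ℝ (Fin d)) 1 with hB
  rcases Nat.eq_zero_or_pos d with hd0 | hdpos
  · subst hd0
    refine ⟨L 0, fun y _ => ?_⟩
    have hy : y = L 0 := Subsingleton.elim y (L 0)
    rw [hy, hL]
    exact ⟨0, Metric.mem_closedBall_self (by norm_num), rfl⟩
  -- main case : 1 ≤ d
  have hBpos : 0 < volume B := Metric.measure_closedBall_pos volume 0 one_pos
  have hBfin : volume B ≠ ⊤ := measure_closedBall_lt_top.ne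
  set g : EuclideanSpace ℝ (Fin d) ≃ₗ[ℝ] EuclideanSpace ℝ (Fin d) := L.linear with hg
  set p := L 0 with hp
  have hLdecomp : ∀ x, L x = g x + p := by
    intro x
    have h1 := congrFun (L.toAffineMap.decomp) x
    simpa using h1
  have hE2 : E = (fun x => g x + p) '' B := by
    rw [hL]
    exact Set.image_congr fun x _ => hLdecomp x
  -- spectral setup
  set a := LinearMap.adjoint (g : EuclideanSpace ℝ (Fin d) →ₗ[ℝ] EuclideanSpace ℝ (Fin d)) with ha
  have hA : (LinearMap.adjoint a * a).IsSymmetric := LinearMap.isSymmetric_adjoint_mul_self a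
  have hadj : LinearMap.adjoint a = (g : EuclideanSpace ℝ (Fin d) →ₗ[ℝ] EuclideanSpace ℝ (Fin d)) := by
    rw [ha, LinearMap.adjoint_adjoint]
  have hn : Module.finrank ℝ (EuclideanSpace ℝ (Fin d)) = d := finrank_euclideanSpace_fin
  set b := hA.eigenvectorBasis hn with hbdef
  set μ := hA.eigenvalues hn with hμdef
  have hμapp : ∀ i, (LinearMap.adjoint a * a) (b i) = μ i • b i := fun i =>
    hA.apply_eigenvectorBasis hn i
  have hAD : (LinearMap.adjoint a * a) = Dmap b μ := by
    apply LinearMap.ext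
    intro x
    apply Dmap_injective b
    intro i
    rw [Dmap_repr]
    exact hA.eigenvectorBasis_apply_self_apply hn x i
  have hgaD : ∀ x, g (a x) = Dmap b μ x := by
    intro x
    have h1 : (LinearMap.adjoint a * a) x = Dmap b μ x := by rw [hAD]
    rw [Module.End.mul_apply, hadj] at h1
    exact h1
  -- positivity of eigenvalues
  have hainj : ∀ v : EuclideanSpace ℝ (Fin d), a v = 0 → v = 0 := by
    intro v hv
    have h1 : (inner ℝ v v : ℝ) = 0 := by
      calc (inner ℝ v v : ℝ) = inner ℝ v (g (g.symm v)) := by rw [g.apply_symm_apply]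
        _ = inner ℝ (a v) (g.symm v) := by
            rw [ha]
            exact (LinearMap.adjoint_inner_left
              (g : EuclideanSpace ℝ (Fin d) →ₗ[ℝ] EuclideanSpace ℝ (Fin d)) (g.symm v) v).symm
        _ = 0 := by rw [hv]; exact inner_zero_left _
    exact inner_self_eq_zero.mp h1
  have hAself : ∀ u : EuclideanSpace ℝ (Fin d), (inner ℝ (Dmap b μ u) u : ℝ) = inner ℝ (a u) (a u) := by
    intro u
    rw [← hAD, Module.End.mul_apply]
    exact LinearMap.adjoint_inner_left a u (a u)
  have hμpos : ∀ i, 0 < μ i := by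
    intro i
    have h1 : (inner ℝ (Dmap b μ (b i)) (b i) : ℝ) = μ i := by
      have h2 : Dmap b μ (b i) = μ i • b i := by rw [← hAD]; exact hμapp i
      rw [h2, real_inner_smul_left]
      have h3 : ‖b i‖ = 1 := b.orthonormal.1 i
      rw [real_inner_self_eq_norm_sq, h3]
      norm_num
    have h4 : a (b i) ≠ 0 := by
      intro h0
      have := hainj (b i) h0
      have h5 : ‖b i‖ = 1 := b.orthonormal.1 i
      rw [this] at h5
      simp at h5
    have h6 : (0:ℝ) < inner ℝ (a (b i)) (a (b i)) := by
      rw [real_inner_self_eq_norm_sq]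
      have := norm_pos_iff.mpr h4
      positivity
    rw [← h1, hAself]
    exact h6
  set σ : Fin d → ℝ := fun i => Real.sqrt (μ i) with hσdef
  have hσpos : ∀ i, 0 < σ i := fun i => Real.sqrt_pos.mpr (hμpos i)
  have hμσ : ∀ i, μ i = σ i * σ i := fun i => (Real.mul_self_sqrt (hμpos i).le).symm
  -- image equality : Dmap b σ '' B = g '' B
  have hinvσ : ∀ i, σ i * (σ i)⁻¹ = 1 := fun i => mul_inv_cancel₀ (hσpos i).ne'
  have himg : Dmap b σ '' B = (fun x => g x) '' B := by
    apply Set.Subset.antisymm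
    · rintro _ ⟨x, hx, rfl⟩
      set u := Dmap b (fun i => (σ i)⁻¹) x with hu
      refine ⟨a u, ?_, ?_⟩
      · rw [hB, mem_closedBall_zero_iff] at hx ⊢
        have h1 : (inner ℝ (a u) (a u) : ℝ) = inner ℝ (Dmap b μ u) u := (hAself u).symm
        have h2 : (inner ℝ (Dmap b μ u) u : ℝ) = inner ℝ x x := by
          rw [inner_repr b, inner_repr b]
          apply Finset.sum_congr rfl
          intro i _
          simp only [hu, Dmap_repr]
          have h3 := (hσpos i).ne'
          rw [hμσ i]
          field_simp
        have h4 : ‖a u‖ ^ 2 = ‖x‖ ^ 2 := by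
          rw [← real_inner_self_eq_norm_sq, ← real_inner_self_eq_norm_sq, h1, h2]
        nlinarith [norm_nonneg (a u), norm_nonneg x]
      · show g (a u) = Dmap b σ x
        rw [hgaD, hu, Dmap_comp]
        apply congrFun
        apply congrArg
        apply Dmap_eq_of
        intro i
        rw [hμσ i, mul_assoc, hinvσ i, mul_one]
    · rintro _ ⟨x, hx, rfl⟩
      set w := g x with hw
      set v := Dmap b (fun i => (μ i)⁻¹) w with hv
      have hgav : g (a v) = w := by
        rw [hgaD, hv, Dmap_comp]
        have h5 : (fun i => μ i * (μ i)⁻¹) = fun _ : Fin d => (1:ℝ) :=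
          funext fun i => mul_inv_cancel₀ (hμpos i).ne'
        rw [Dmap_eq_of b (congrFun h5), Dmap_one]
      have hav : a v = x := g.injective (by rw [hgav])
      refine ⟨Dmap b (fun i => (σ i)⁻¹) w, ?_, ?_⟩
      · rw [hB, mem_closedBall_zero_iff] at hx ⊢
        have h1 : (inner ℝ x x : ℝ) = inner ℝ (a v) (a v) := by rw [hav]
        have h2 : (inner ℝ (a v) (a v) : ℝ) = inner ℝ (Dmap b μ v) v := (hAself v).symm
        have h3 : (inner ℝ (Dmap b μ v) v : ℝ) =
            inner ℝ (Dmap b (fun i => (σ i)⁻¹) w) (Dmap b (fun i => (σ i)⁻¹) w) := by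
          rw [inner_repr b, inner_repr b]
          apply Finset.sum_congr rfl
          intro i _
          simp only [hv, Dmap_repr]
          have h6 := (hσpos i).ne'
          have h7 := (hμpos i).ne'
          rw [hμσ i]
          field_simp
        have h8 : ‖Dmap b (fun i => (σ i)⁻¹) w‖ ^ 2 = ‖x‖ ^ 2 := by
          rw [← real_inner_self_eq_norm_sq, ← real_inner_self_eq_norm_sq, ← h3, ← h2, ← h1]
        nlinarith [norm_nonneg (Dmap b (fun i => (σ i)⁻¹) w), norm_nonneg x]
      · rw [Dmap_comp]
        have h9 : (fun i => σ i * (σ i)⁻¹) = fun _ : Fin d => (1:ℝ) := funext hinvσ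
        rw [Dmap_eq_of b (congrFun h9), Dmap_one]
  -- volume computation
  have hvolDmap : ∀ (q : EuclideanSpace ℝ (Fin d)) (r : Fin d → ℝ),
      volume ((fun x => Dmap b r x + q) '' B) = ENNReal.ofReal |∏ i, r i| * volume B := by
    intro q r
    have h1 : (fun x => Dmap b r x + q) '' B = q +ᵥ (Dmap b r '' B) := by
      rw [← Set.image_vadd, Set.image_image]
      apply Set.image_congr
      intro x _
      rw [vadd_eq_add, add_comm]
    rw [h1, measure_vadd, Measure.addHaar_image_linearMap, Dmap_det]
  have hvolE : volume E = ENNReal.ofReal (∏ i, σ i) * volume B := by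
    have h2 : E = (fun x => Dmap b σ x + p) '' B := by
      rw [hE2, ← Set.image_image (fun z => z + p) (fun x => g x),
        ← himg, Set.image_image]
    rw [h2, hvolDmap p σ, abs_of_pos (Finset.prod_pos fun i _ => hσpos i)]
  have hδprod : δ ≤ ∏ i, σ i := by
    rw [hvolE] at hvol
    have h3 := (ENNReal.mul_le_mul_iff_left hBpos.ne' hBfin).mp hvol
    exact (ENNReal.ofReal_le_ofReal_iff (Finset.prod_pos fun i _ => hσpos i).le).mp h3
  -- the key family of ellipsoids
  have hprod : ∀ lam : ℝ, 0 ≤ lam → lam ≤ 1 →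
      (∏ i, (lam + (1 - lam) * σ i)) ≤ 1 := by
    intro lam h0 h1
    set r : Fin d → ℝ := fun i => lam + (1 - lam) * σ i with hr
    have hrpos : ∀ i, 0 < r i := by
      intro i
      rcases h0.lt_or_eq with h | h
      · exact add_pos_of_pos_of_nonneg h (mul_nonneg (by linarith) (hσpos i).le)
      · have : lam = 0 := h.symm
        simp only [hr, this]
        have := hσpos i
        linarith
    set De := Dequiv b r (fun i => (hrpos i).ne') with hDe
    set L' := De.toAffineEquiv.trans (AffineEquiv.constVAdd ℝ (EuclideanSpace ℝ (Fin d))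
      ((1 - lam) • p)) with hL'
    have hL'app : ∀ x, L' x = Dmap b r x + (1 - lam) • p := by
      intro x
      rw [hL', AffineEquiv.trans_apply,
        congrFun (LinearEquiv.coe_toAffineEquiv De) x, Dequiv_apply,
        AffineEquiv.constVAdd_apply, vadd_eq_add, add_comm]
    have hFell : IsEllipsoid (L' '' B) := ⟨L', rfl⟩
    have hFC : (L' '' B) ⊆ C := by
      rintro _ ⟨x, hx, rfl⟩
      have hcomb : L' x = lam • x + (1 - lam) • (p + Dmap b σ x) := by
        rw [hL'app, ← Dmap_linear_comb b σ lam x]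
        rw [smul_add]
        abel
      rw [hcomb]
      have hxE : p + Dmap b σ x ∈ E := by
        have hmem : Dmap b σ x ∈ (fun x => g x) '' B := himg ▸ ⟨x, hx, rfl⟩
        obtain ⟨x', hx', hgx'⟩ := hmem
        rw [hE2]
        refine ⟨x', hx', ?_⟩
        show g x' + p = p + Dmap b σ x
        rw [show g x' = Dmap b σ x from hgx', add_comm]
      exact hC (hball hx) (hEC hxE) h0 (by linarith) (by ring)
    have hvolF := hmax _ hFell hFC
    have hFval : volume (L' '' B) = ENNReal.ofReal |∏ i, r i| * volume B := by
      have h4 : L' '' B = (fun x => Dmap b r x + (1 - lam) • p) '' B :=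
        Set.image_congr fun x _ => hL'app x
      rw [h4, hvolDmap]
    rw [hFval] at hvolF
    have h5 : ENNReal.ofReal |∏ i, r i| ≤ 1 := by
      have h6 : ENNReal.ofReal |∏ i, r i| * volume B ≤ 1 * volume B := by
        rwa [one_mul]
      exact (ENNReal.mul_le_mul_iff_left hBpos.ne' hBfin).mp h6
    have h7 := ENNReal.ofReal_le_one.mp h5
    calc (∏ i, r i) ≤ |∏ i, r i| := le_abs_self _
      _ ≤ 1 := h7
  -- arithmetic: every σ j is at least δ / d^(d-1)
  have hdR : (0:ℝ) < d := by exact_mod_cast hdpos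
  have hpow : (0:ℝ) < (d:ℝ) ^ (d - 1) := pow_pos hdR _
  have hσlb : ∀ j, δ / (d:ℝ) ^ (d - 1) ≤ σ j := by
    intro j
    rcases Nat.lt_or_ge d 2 with hd1 | hd2
    · have hd1' : d = 1 := by omega
      subst hd1'
      have h1 : (∏ i, σ i) = σ j := by
        rw [show j = (0 : Fin 1) from Subsingleton.elim j 0, Fin.prod_univ_one]
      have h2 : δ / ((1:ℕ):ℝ) ^ (1 - 1) = δ := by norm_num
      rw [h2]
      rw [h1] at hδprod
      exact hδprod
    · have hub : ∀ i, σ i ≤ d := by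
        intro i
        by_contra hgt
        push_neg at hgt
        set s := σ i with hs
        have hd1R : (1:ℝ) ≤ (d:ℝ) - 1 := by
          have h2 : (2:ℝ) ≤ (d:ℝ) := by exact_mod_cast hd2
          linarith
        have hsd : (d:ℝ) < s := hgt
        have hs1 : (1:ℝ) < s - 1 := by linarith
        have hden : (0:ℝ) < 2 * ((d:ℝ) - 1) * (s - 1) := by nlinarith
        set ε := (s - d) / (2 * ((d:ℝ) - 1) * (s - 1)) with hε
        have hε0 : 0 < ε := div_pos (by linarith) hden
        have hεhalf : ε ≤ 1/2 := by
          rw [hε, div_le_iff₀ hden]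
          nlinarith
        have hkey : ((d:ℝ) - 1) * (s - 1) * ε = (s - d)/2 := by
          rw [hε]
          field_simp
        have hlam0 : (0:ℝ) ≤ 1 - ε := by linarith
        have h1 := hprod (1 - ε) hlam0 (by linarith)
        have heq : ∀ k, (1 - ε) + (1 - (1 - ε)) * σ k = (1 - ε) + ε * σ k := fun k => by ring
        rw [Finset.prod_congr rfl (fun k _ => heq k)] at h1
        have hterm : ∀ k, (1 - ε) ≤ (1 - ε) + ε * σ k := fun k => by
          nlinarith [mul_nonneg hε0.le (hσpos k).le]
        have hlow : ((1 - ε) + ε * s) * (1 - ε) ^ (d - 1) ≤ ∏ k, ((1 - ε) + ε * σ k) := by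
          rw [← Finset.mul_prod_erase _ _ (Finset.mem_univ i)]
          apply mul_le_mul_of_nonneg_left _ (by nlinarith [mul_nonneg hε0.le (hσpos i).le])
          have hcard : (Finset.univ.erase i).card = d - 1 := by
            rw [Finset.card_erase_of_mem (Finset.mem_univ i), Finset.card_univ,
              Fintype.card_fin]
          calc (1 - ε) ^ (d - 1) = ∏ _k ∈ Finset.univ.erase i, (1 - ε) := by
                rw [Finset.prod_const, hcard]
            _ ≤ ∏ k ∈ Finset.univ.erase i, ((1 - ε) + ε * σ k) :=
                Finset.prod_le_prod (fun k _ => by linarith) (fun k _ => hterm k)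
        have hbern : 1 - ((d:ℝ) - 1) * ε ≤ (1 - ε) ^ (d - 1) := by
          have h3 := one_add_mul_le_pow (a := -ε) (by linarith) (d - 1)
          have h4 : ((d - 1 : ℕ) : ℝ) = (d:ℝ) - 1 := by
            have := Nat.cast_sub (by omega : 1 ≤ d) (R := ℝ)
            simpa using this
          rw [h4] at h3
          calc 1 - ((d:ℝ) - 1) * ε = 1 + ((d:ℝ) - 1) * (-ε) := by ring
            _ ≤ (1 + -ε) ^ (d - 1) := h3
            _ = (1 - ε) ^ (d - 1) := by ring_nf
        have hpos1 : (0:ℝ) < (1 - ε) + ε * s := by nlinarith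
        have hcontr : 1 < ((1 - ε) + ε * s) * (1 - ε) ^ (d - 1) := by
          calc (1:ℝ) < ((1 - ε) + ε * s) * (1 - ((d:ℝ) - 1) * ε) := by
                nlinarith [mul_pos hε0 (sub_pos.mpr hsd)]
            _ ≤ ((1 - ε) + ε * s) * (1 - ε) ^ (d - 1) :=
                mul_le_mul_of_nonneg_left hbern hpos1.le
        linarith
      rw [div_le_iff₀ hpow]
      calc δ ≤ ∏ i, σ i := hδprod
        _ = σ j * ∏ k ∈ Finset.univ.erase j, σ k :=
            (Finset.mul_prod_erase _ _ (Finset.mem_univ j)).symm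
        _ ≤ σ j * (d:ℝ) ^ (d - 1) := by
            apply mul_le_mul_of_nonneg_left _ (hσpos j).le
            have hcard : (Finset.univ.erase j).card = d - 1 := by
              rw [Finset.card_erase_of_mem (Finset.mem_univ j), Finset.card_univ,
                Fintype.card_fin]
            calc (∏ k ∈ Finset.univ.erase j, σ k)
                ≤ ∏ _k ∈ Finset.univ.erase j, (d:ℝ) :=
                  Finset.prod_le_prod (fun k _ => (hσpos k).le) (fun k _ => hub k)
              _ = (d:ℝ) ^ (d - 1) := by rw [Finset.prod_const, hcard]
  -- conclusion: the ball of radius δ / d^(d-1) around p is inside E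
  refine ⟨p, fun y hy => ?_⟩
  set ρ := δ / (d:ℝ) ^ (d - 1) with hρ
  have hρ0 : 0 < ρ := div_pos hδ0 hpow
  have hz : ‖y - p‖ ≤ ρ := by
    rw [← dist_eq_norm]
    exact hy
  set z := y - p with hzdef
  set x := Dmap b (fun i => (σ i)⁻¹) z with hxdef
  have hx1 : ‖x‖ ≤ 1 := by
    have h5 : (inner ℝ x x : ℝ) ≤ (inner ℝ z z : ℝ) / ρ^2 := by
      rw [inner_repr b, inner_repr b]
      rw [Finset.sum_div]
      apply Finset.sum_le_sum
      intro i _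
      simp only [hxdef, Dmap_repr]
      rw [div_eq_mul_inv]
      have h6 : ((σ i)⁻¹)^2 ≤ (ρ^2)⁻¹ := by
        rw [← inv_pow]
        apply pow_le_pow_left₀ (inv_nonneg.mpr (hσpos i).le)
        exact inv_anti₀ hρ0 (hσlb i)
      calc (σ i)⁻¹ * b.repr z i * ((σ i)⁻¹ * b.repr z i)
          = ((σ i)⁻¹)^2 * (b.repr z i * b.repr z i) := by ring
        _ ≤ (ρ^2)⁻¹ * (b.repr z i * b.repr z i) := by
            apply mul_le_mul_of_nonneg_right h6 (mul_self_nonneg _)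
        _ = b.repr z i * b.repr z i * (ρ ^ 2)⁻¹ := by ring
    have h7 : (inner ℝ z z : ℝ) ≤ ρ^2 := by
      rw [real_inner_self_eq_norm_sq]
      nlinarith [norm_nonneg z]
    have h8 : (inner ℝ x x : ℝ) ≤ 1 := by
      have h9 : (inner ℝ z z : ℝ) / ρ^2 ≤ 1 := by
        rw [div_le_one (by positivity)]
        exact h7
      linarith
    rw [real_inner_self_eq_norm_sq] at h8
    nlinarith [norm_nonneg x]
  have hDx : Dmap b σ x = z := by
    rw [hxdef, Dmap_comp, Dmap_eq_of b hinvσ, Dmap_one]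
  have hzmem : z ∈ (fun x => g x) '' B := by
    rw [← himg]
    exact ⟨x, by rw [hB, mem_closedBall_zero_iff]; exact hx1, hDx⟩
  obtain ⟨x', hx', hgx'⟩ := hzmem
  rw [hE2]
  refine ⟨x', hx', ?_⟩
  show g x' + p = y
  rw [show g x' = z from hgx', hzdef]
  abel
end

section
/- For every convex body K in ℝ^d, there exists an ellipsoid E ⊆ K with Vol(E) ≥ d^{−d} · Vol(K). -/
open MeasureTheory Matrix

/-- Scalar facts about the chosen `ε`. -/
lemma johnEps_facts {d : ℕ} (hd : 1 ≤ d) {r : ℝ} (hr : (d:ℝ) < r) :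
    0 < (r - d)/((r-1)*d + (r-d)) ∧ (r - d)/((r-1)*d + (r-d)) < 1 ∧
      ((d:ℝ)-1) * ((r - d)/((r-1)*d + (r-d))) < 1 := by
  have hd1 : (1:ℝ) ≤ d := by exact_mod_cast hd
  have hr1 : (1:ℝ) < r := lt_of_le_of_lt hd1 hr
  have hD : 0 < (r-1)*d + (r-d) := by nlinarith
  refine ⟨div_pos (by linarith) hD, (div_lt_one hD).2 (by nlinarith), ?_⟩
  rw [mul_div_assoc']
  apply (div_lt_one hD).2
  nlinarith

/-- The determinant gain: `a^2 (1-ε)^(d-1) > 1`. -/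
lemma johnDet_gain {d : ℕ} (hd : 1 ≤ d) {r ε a : ℝ} (hr : (d:ℝ) < r)
    (hε : ε = (r - d)/((r-1)*d + (r-d))) (ha : a = 1 + (r-1)*ε/2) :
    1 < a^2 * (1-ε)^(d-1) := by
  have hd1 : (1:ℝ) ≤ d := by exact_mod_cast hd
  have hr1 : (1:ℝ) < r := lt_of_le_of_lt hd1 hr
  obtain ⟨hε0, hε1, hdε⟩ := johnEps_facts hd hr
  rw [← hε] at hε0 hε1 hdε
  have hbern : 1 + ((d:ℝ)-1) * (-ε) ≤ (1-ε)^(d-1) := by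
    have := one_add_mul_le_pow (a := -ε) (by linarith) (d-1)
    have hcast : ((d-1 : ℕ) : ℝ) = (d:ℝ) - 1 := by
      have : (1:ℕ) ≤ d := hd
      push_cast [Nat.cast_sub this]
      ring
    rw [hcast] at this
    calc 1 + ((d:ℝ)-1) * (-ε) = 1 + ((d:ℝ)-1) * (-ε) := rfl
      _ ≤ (1 + -ε)^(d-1) := this
      _ = (1-ε)^(d-1) := by ring_nf
  have ha2 : 1 + (r-1)*ε ≤ a^2 := by nlinarith [sq_nonneg ((r-1)*ε/2)]
  -- key: (1+(r-1)ε)(1-(d-1)ε) > 1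
  have hkey : 1 < (1 + (r-1)*ε) * (1 + ((d:ℝ)-1) * (-ε)) := by
    have hDpos : 0 < (r-1)*d + (r-d) := by nlinarith
    have hεval : ε * ((r-1)*d + (r-d)) = r - d := by
      rw [hε]; exact div_mul_cancel₀ _ (ne_of_gt hDpos)
    nlinarith [mul_pos hε0 hε0, sq_nonneg ε]
  have h1 : 0 < 1 + ((d:ℝ)-1) * (-ε) := by nlinarith
  have h2 : 0 ≤ a^2 := sq_nonneg a
  calc 1 < (1 + (r-1)*ε) * (1 + ((d:ℝ)-1) * (-ε)) := hkey
    _ ≤ a^2 * (1 + ((d:ℝ)-1) * (-ε)) := by nlinarith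
    _ ≤ a^2 * (1-ε)^(d-1) := by nlinarith

set_option maxHeartbeats 1000000 in

lemma johnT_exists {d : ℕ} (hd : 1 ≤ d) {r ε a s : ℝ} (hr : (d:ℝ) < r)
    (hε : ε = (r - d)/((r-1)*d + (r-d))) (ha : a = 1 + (r-1)*ε/2)
    (hs1 : -1 ≤ s) (hs2 : s ≤ 1) :
    ∃ t, 0 ≤ t ∧ t < 1 ∧ (a*s + a - 1 - t*r)^2 + (1-ε)*(1-s^2) ≤ (1-t)^2 := by
  have hd1 : (1:ℝ) ≤ d := by exact_mod_cast hd
  have hr1 : (1:ℝ) < r := lt_of_le_of_lt hd1 hr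
  have hr0 : 0 < r := by linarith
  have hDpos : 0 < (r-1)*d + (r-d) := by nlinarith
  have hεval : ε * ((r-1)*d + (r-d)) = r - d := by rw [hε]; exact div_mul_cancel₀ _ (ne_of_gt hDpos)
  have hε0 : 0 < ε := by rw [hε]; exact div_pos (by linarith) hDpos
  have hε1 : ε < 1 := by rw [hε]; exact (div_lt_one hDpos).2 (by nlinarith)
  have ha1 : 1 < a := by rw [ha]; nlinarith
  have hrel : 2*a = 2 + (r-1)*ε := by rw [ha]; ring
  obtain ⟨X, hX⟩ : ∃ X, X = a*s + a - 1 := ⟨_, rfl⟩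
  rw [← hX]
  -- the tangency inequality, valid for all s
  have hid : (r - X)^2 - (1-ε)*(r^2-1)*(1-s^2) = ((r+1-a)*s - a)^2 := by
    rw [hX]; linear_combination (-(1-s^2)*(r+1)) * hrel
  have htang : (1-ε)*(r^2-1)*(1-s^2) ≤ (r - X)^2 := by
    nlinarith [sq_nonneg ((r+1-a)*s - a), hid]
  by_cases hcase : X ≤ 1/r
  · -- t = 0 : show X^2 + (1-ε)(1-s^2) ≤ 1
    refine ⟨0, le_refl 0, one_pos, ?_⟩
    have hfac : X^2 + (1-ε)*(1-s^2) - 1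
        = (s+1) * ((a^2-1+ε)*s + (a-1)^2 - ε) := by rw [hX]; ring
    have hα : 0 < a^2-1+ε := by nlinarith
    have hN : (a^2-1+ε)*(1-(a-1)*r) + a*r*((a-1)^2-ε)
        = -(ε^2*(r-1)*(r+1)^2/4) := by
      linear_combination ((1/2)*((1-r)*(a-1+(r-1)*ε/2) + 2*(1-r*ε))) * hrel
    have hars : a*r*s ≤ 1 - (a-1)*r := by
      have h1 : r * X ≤ 1 := by
        calc r * X ≤ r * (1/r) := mul_le_mul_of_nonneg_left hcase (le_of_lt hr0)
          _ = 1 := by field_simp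
      rw [hX] at h1; nlinarith
    have hlin : (a^2-1+ε)*s + (a-1)^2 - ε ≤ 0 := by
      have h1 : (a^2-1+ε)*(a*r*s) ≤ (a^2-1+ε)*(1-(a-1)*r) :=
        mul_le_mul_of_nonneg_left hars (le_of_lt hα)
      have h2 : (a^2-1+ε)*(1-(a-1)*r) + a*r*((a-1)^2-ε) ≤ 0 := by
        rw [hN]; nlinarith [sq_nonneg ε]
      have har : 0 < a*r := by nlinarith
      have h3 : a*r*((a^2-1+ε)*s + (a-1)^2 - ε) ≤ a*r*0 := by
        rw [mul_zero]; linarith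
      exact le_of_mul_le_mul_left h3 har
    linarith [mul_nonneg (by linarith : (0:ℝ) ≤ s+1) (neg_nonneg.2 hlin), hfac]
  · -- t = (rX-1)/(r²-1)
    push_neg at hcase
    have hr2 : 0 < r^2 - 1 := by nlinarith
    have hrX : 1 < r * X := by
      calc 1 = r * (1/r) := by field_simp
        _ < r * X := mul_lt_mul_of_pos_left hcase hr0
    refine ⟨(r*X-1)/(r^2-1), div_nonneg (by linarith) (le_of_lt hr2), ?_, ?_⟩
    · rw [div_lt_one hr2]
      have hXlt : X < r := by rw [hX]; nlinarith
      nlinarith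
    · have e1 : (1-(r*X-1)/(r^2-1))^2 - (X-(r*X-1)/(r^2-1)*r)^2
          = (r-X)^2/(r^2-1) := by
        field_simp
        ring
      have e2 : (1-ε)*(1-s^2) ≤ (r-X)^2/(r^2-1) := by
        rw [le_div_iff₀ hr2]; nlinarith
      linarith [e1, e2]

noncomputable def johnM {d : ℕ} (a b : ℝ) (u : EuclideanSpace ℝ (Fin d)) :
    Matrix (Fin d) (Fin d) ℝ :=
  b • (1 : Matrix (Fin d) (Fin d) ℝ) + (a - b) • Matrix.vecMulVec u u

lemma johnM_mulVec {d : ℕ} (a b : ℝ) (u v : EuclideanSpace ℝ (Fin d)) :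
    (EuclideanSpace.equiv (Fin d) ℝ).symm ((johnM a b u).mulVec v)
      = b • v + ((a - b) * (inner ℝ u v : ℝ)) • u := by
  apply (EuclideanSpace.equiv (Fin d) ℝ).injective
  funext i
  simp only [ContinuousLinearEquiv.apply_symm_apply]
  simp only [johnM, Matrix.add_mulVec, Matrix.smul_mulVec, Matrix.one_mulVec]
  have h1 : (Matrix.vecMulVec (u : Fin d → ℝ) u).mulVec v = ((u : Fin d → ℝ) ⬝ᵥ v) • (u : Fin d → ℝ) := by
    funext j
    simp [Matrix.mulVec, Matrix.vecMulVec, dotProduct, Finset.sum_mul, Finset.mul_sum]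
    congr 1; funext k; ring
  rw [h1]
  have h2 : (inner ℝ u v : ℝ) = (u : Fin d → ℝ) ⬝ᵥ v := by
    simp [PiLp.inner_apply, dotProduct, RCLike.inner_apply, mul_comm]
  rw [h2]
  show b * v i + (a - b) * ((u ⬝ᵥ v) * u i) = b * v i + ((a - b) * (u ⬝ᵥ v)) * u i
  ring

lemma johnM_det {d : ℕ} (a b : ℝ) (hb : b ≠ 0) (u : EuclideanSpace ℝ (Fin d))
    (hu : ‖u‖ = 1) : (johnM a b u).det = a * b^(d-1) := by
  have hdot : (u : Fin d → ℝ) ⬝ᵥ u = 1 := by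
    have := real_inner_self_eq_norm_sq u
    rw [hu] at this
    simp only [PiLp.inner_apply, RCLike.inner_apply, starRingEnd_apply, star_trivial] at this
    simpa [dotProduct] using this
  have key : johnM a b u = b • ((1 : Matrix (Fin d) (Fin d) ℝ)
      + Matrix.replicateCol Unit ((b⁻¹ * (a-b)) • (u : Fin d → ℝ)) * Matrix.replicateRow Unit u) := by
    rw [johnM]
    rw [smul_add]
    congr 1
    funext i j
    simp [Matrix.vecMulVec, Matrix.mul_apply, Matrix.col, Matrix.row, Matrix.smul_apply,
      Finset.sum_const, smul_eq_mul]
    field_simp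
  rw [key, Matrix.det_smul, Matrix.det_one_add_replicateCol_mul_replicateRow]
  rw [dotProduct_smul]
  rw [hdot]
  have hd' : Fintype.card (Fin d) = d := by simp
  rw [hd']
  rcases Nat.eq_zero_or_pos d with h0 | hpos
  · subst h0
    exfalso
    rw [show (u : Fin 0 → ℝ) ⬝ᵥ u = 0 by simp [dotProduct]] at hdot
    exact one_ne_zero hdot.symm
  · have : d = (d-1) + 1 := by omega
    rw [this, pow_succ]
    simp only [smul_eq_mul, Nat.add_sub_cancel]
    linear_combination (b^(d-1)*(a-b)) * mul_inv_cancel₀ hb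

theorem john_improve {d : ℕ} (hd : 1 ≤ d) {K : Set (EuclideanSpace ℝ (Fin d))}
    (hKc : Convex ℝ K) (hB : Metric.closedBall (0 : EuclideanSpace ℝ (Fin d)) 1 ⊆ K)
    {x : EuclideanSpace ℝ (Fin d)} (hx : x ∈ K) (hxn : (d:ℝ) < ‖x‖) :
    ∃ (M : Matrix (Fin d) (Fin d) ℝ) (p : EuclideanSpace ℝ (Fin d)),
      (∀ v : EuclideanSpace ℝ (Fin d), ‖v‖ ≤ 1 →
        ((EuclideanSpace.equiv (Fin d) ℝ).symm (M.mulVec v) + p) ∈ K) ∧ 1 < M.det := by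
  have hd1 : (1:ℝ) ≤ d := by exact_mod_cast hd
  obtain ⟨r, hr⟩ : ∃ r : ℝ, r = ‖x‖ := ⟨_, rfl⟩
  have hdr : (d:ℝ) < r := by rw [hr]; exact hxn
  have hr1 : 1 < r := lt_of_le_of_lt hd1 hdr
  have hr0 : 0 < r := by linarith
  obtain ⟨ε, hε⟩ : ∃ ε : ℝ, ε = (r - d)/((r-1)*d + (r-d)) := ⟨_, rfl⟩
  obtain ⟨a, ha⟩ : ∃ a : ℝ, a = 1 + (r-1)*ε/2 := ⟨_, rfl⟩
  obtain ⟨hε0, hε1, -⟩ := johnEps_facts hd hdr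
  rw [← hε] at hε0 hε1
  have ha1 : 1 < a := by rw [ha]; nlinarith
  obtain ⟨b, hbdef⟩ : ∃ b : ℝ, b = Real.sqrt (1-ε) := ⟨_, rfl⟩
  have hb0 : 0 < b := by rw [hbdef]; exact Real.sqrt_pos.2 (by linarith)
  have hb2 : b^2 = 1 - ε := by rw [hbdef, Real.sq_sqrt (by linarith)]
  have hble : b ≤ 1 := by nlinarith
  obtain ⟨u, hu⟩ : ∃ u : EuclideanSpace ℝ (Fin d), u = r⁻¹ • x := ⟨_, rfl⟩
  have hun : ‖u‖ = 1 := by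
    rw [hu, norm_smul, Real.norm_eq_abs, abs_of_pos (inv_pos.2 hr0), ← hr]
    field_simp
  have hux : x = r • u := by
    rw [hu, smul_smul]
    field_simp
    exact (one_smul ℝ x).symm
  refine ⟨johnM a b u, (a-1) • u, ?_, ?_⟩
  · -- containment
    intro v hv
    obtain ⟨s, hs⟩ : ∃ s : ℝ, s = (inner ℝ u v : ℝ) := ⟨_, rfl⟩
    have hsabs : |s| ≤ 1 := by
      rw [hs]
      calc |(inner ℝ u v : ℝ)| ≤ ‖u‖ * ‖v‖ := abs_real_inner_le_norm u v
        _ ≤ 1 := by rw [hun]; simpa using hv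
    have hs1 : -1 ≤ s := neg_le_of_abs_le hsabs
    have hs2 : s ≤ 1 := le_of_abs_le hsabs
    obtain ⟨w, hw⟩ : ∃ w, w = v - s • u := ⟨_, rfl⟩
    have huw : (inner ℝ u w : ℝ) = 0 := by
      rw [hw, inner_sub_right, real_inner_smul_right, real_inner_self_eq_norm_sq, hun, ← hs]
      ring
    have hwsq : ‖w‖^2 ≤ 1 - s^2 := by
      have : ‖w‖^2 = ‖v‖^2 - s^2 := by
        rw [hw, @norm_sub_sq_real, real_inner_smul_right, real_inner_comm, ← hs,
          norm_smul, Real.norm_eq_abs, hun, mul_one, sq_abs]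
        ring
      rw [this]
      have hv2 : ‖v‖^2 ≤ 1 := by nlinarith [norm_nonneg v]
      linarith
    -- z = X • u + b • w
    obtain ⟨X, hX⟩ : ∃ X : ℝ, X = a*s + a - 1 := ⟨_, rfl⟩
    have hz : (EuclideanSpace.equiv (Fin d) ℝ).symm ((johnM a b u).mulVec v) + (a-1) • u
        = X • u + b • w := by
      rw [johnM_mulVec, ← hs, hw, hX]
      rw [smul_sub, smul_smul]
      module
    obtain ⟨t, ht0, ht1, htle⟩ := johnT_exists hd hdr hε ha hs1 hs2
    rw [← hX] at htle
    -- distance from t • x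
    have hdist : ‖(X • u + b • w) - t • x‖^2 ≤ (1-t)^2 := by
      have hperp : (inner ℝ ((X - t*r) • u) (b • w) : ℝ) = 0 := by
        rw [real_inner_smul_left, real_inner_smul_right, huw]; ring
      have : (X • u + b • w) - t • x = (X - t*r) • u + b • w := by
        rw [hux, smul_smul]; module
      rw [this, @norm_add_sq_real, hperp]
      have h1 : ‖(X - t*r) • u‖^2 = (X - t*r)^2 := by
        rw [norm_smul, Real.norm_eq_abs, hun, mul_one, sq_abs]
      have h2 : ‖b • w‖^2 = b^2 * ‖w‖^2 := by
        rw [norm_smul, Real.norm_eq_abs, mul_pow, sq_abs]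
      rw [h1, h2, hb2]
      have : (1-ε) * ‖w‖^2 ≤ (1-ε)*(1-s^2) :=
        mul_le_mul_of_nonneg_left hwsq (by linarith)
      linarith
    have ht1' : (0:ℝ) < 1 - t := by linarith
    have hdist' : ‖(X • u + b • w) - t • x‖ ≤ 1 - t := by
      have h := Real.sqrt_le_sqrt hdist
      rwa [Real.sqrt_sq (norm_nonneg _), Real.sqrt_sq (by linarith : (0:ℝ) ≤ 1-t)] at h
    -- convex combination
    obtain ⟨y, hy⟩ : ∃ y, y = (1-t)⁻¹ • ((X • u + b • w) - t • x) := ⟨_, rfl⟩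
    have hyn : ‖y‖ ≤ 1 := by
      rw [hy, norm_smul, Real.norm_eq_abs, abs_of_pos (inv_pos.2 ht1')]
      rw [inv_mul_le_iff₀ ht1', mul_one]
      exact hdist'
    have hyK : y ∈ K := hB (by simpa [Metric.mem_closedBall] using hyn)
    have hcomb : X • u + b • w = t • x + (1-t) • y := by
      rw [hy, smul_smul]
      rw [mul_inv_cancel₀ (ne_of_gt ht1'), one_smul]
      module
    rw [hz, hcomb]
    exact hKc hx hyK ht0 (by linarith) (by ring)
  · -- determinant
    rw [johnM_det a b (ne_of_gt hb0) u hun]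
    have hgain := johnDet_gain hd hdr hε ha
    have hpos : 0 < a * b^(d-1) := by positivity
    have hsq : (a * b^(d-1))^2 = a^2 * (1-ε)^(d-1) := by
      rw [mul_pow, ← pow_mul, mul_comm (d-1) 2, pow_mul, hb2]
    nlinarith [hpos, hsq, hgain, sq_nonneg (a * b^(d-1) - 1), sq_nonneg (a * b^(d-1) + 1)]

lemma coord_le_norm' {d : ℕ} (y : EuclideanSpace ℝ (Fin d)) (i : Fin d) : |y i| ≤ ‖y‖ := by
  rw [EuclideanSpace.norm_eq]
  have h1 : |y i| = Real.sqrt (‖y i‖^2) := by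
    rw [Real.sqrt_sq_eq_abs, Real.norm_eq_abs, abs_abs]
  rw [h1]
  exact Real.sqrt_le_sqrt (Finset.single_le_sum (f := fun j => ‖y j‖ ^ 2)
    (fun j _ => sq_nonneg _) (Finset.mem_univ i))

/-- membership predicate: the affine image of the unit ball by `q` is inside `K`. -/
def inS {d : ℕ} (K : Set (EuclideanSpace ℝ (Fin d)))
    (q : (Fin d → Fin d → ℝ) × (Fin d → ℝ)) : Prop :=
  ∀ v : EuclideanSpace ℝ (Fin d), ‖v‖ ≤ 1 →
    (EuclideanSpace.equiv (Fin d) ℝ).symm ((Matrix.of q.1).mulVec v + q.2) ∈ K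

lemma exists_max_ellipsoid {d : ℕ} {K : Set (EuclideanSpace ℝ (Fin d))}
    (hKcomp : IsCompact K) (hKint : (interior K).Nonempty) :
    ∃ q : (Fin d → Fin d → ℝ) × (Fin d → ℝ), inS K q ∧ 0 < (Matrix.of q.1).det ∧
      ∀ q', inS K q' → (Matrix.of q'.1).det ≤ (Matrix.of q.1).det := by
  obtain ⟨x₀, hx₀⟩ := hKint
  obtain ⟨ρ, hρ0, hρball⟩ := Metric.isOpen_iff.mp isOpen_interior x₀ hx₀
  have hballK : Metric.ball x₀ ρ ⊆ K := hρball.trans interior_subset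
  -- the candidate small ball
  obtain ⟨R, hR⟩ := hKcomp.isBounded.subset_closedBall 0
  -- S is closed
  have hcont : ∀ v : EuclideanSpace ℝ (Fin d),
      Continuous (fun q : (Fin d → Fin d → ℝ) × (Fin d → ℝ) =>
        (EuclideanSpace.equiv (Fin d) ℝ).symm ((Matrix.of q.1).mulVec v + q.2)) :=
    fun v => ((EuclideanSpace.equiv (Fin d) ℝ).symm.continuous).comp
      ((Continuous.matrix_mulVec continuous_fst continuous_const).add continuous_snd)
  have hSclosed : IsClosed {q : (Fin d → Fin d → ℝ) × (Fin d → ℝ) | inS K q} := by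
    have heq : {q : (Fin d → Fin d → ℝ) × (Fin d → ℝ) | inS K q}
        = ⋂ (v : EuclideanSpace ℝ (Fin d)) (_ : ‖v‖ ≤ 1),
          (fun q : (Fin d → Fin d → ℝ) × (Fin d → ℝ) =>
            (EuclideanSpace.equiv (Fin d) ℝ).symm ((Matrix.of q.1).mulVec v + q.2)) ⁻¹' K := by
      ext q; simp [inS, Set.mem_iInter]
    rw [heq]
    exact isClosed_iInter fun v => isClosed_iInter fun _ =>
      (hKcomp.isClosed).preimage (hcont v)
  -- S is bounded
  have hSbdd : Bornology.IsBounded {q : (Fin d → Fin d → ℝ) × (Fin d → ℝ) | inS K q} := by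
    apply Bornology.IsBounded.subset (Metric.isBounded_closedBall
      (x := (0 : (Fin d → Fin d → ℝ) × (Fin d → ℝ))) (r := 2*|R|+2))
    intro q hq
    have hRnn : (0:ℝ) ≤ |R| := abs_nonneg R
    have hmem : ∀ y ∈ K, ∀ i, |y i| ≤ |R| := by
      intro y hy i
      have h1 : ‖y‖ ≤ R := by simpa [Metric.mem_closedBall, dist_zero_right] using hR hy
      exact (coord_le_norm' y i).trans (h1.trans (le_abs_self R))
    -- bound on p
    have hp : ∀ i, |q.2 i| ≤ |R| := by
      have h0 := hq 0 (by simp)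
      rw [WithLp.ofLp_zero, Matrix.mulVec_zero, zero_add] at h0
      exact hmem _ h0
    -- bound on matrix entries
    have hM : ∀ i j, |q.1 i j| ≤ 2*|R| := by
      intro i j
      have h1 := hq (EuclideanSpace.single j 1) (by rw [EuclideanSpace.norm_single]; simp)
      have hsingle : ((EuclideanSpace.single j 1 : EuclideanSpace ℝ (Fin d)) : Fin d → ℝ)
          = Pi.single j 1 := by
        funext k
        rw [EuclideanSpace.single_apply]
        simp [Pi.single_apply]
      rw [hsingle, Matrix.mulVec_single] at h1
      have h2 := hmem _ h1 i
      have h3 : ((EuclideanSpace.equiv (Fin d) ℝ).symm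
          (MulOpposite.op (1:ℝ) • (Matrix.of q.1).col j + q.2)) i = q.1 i j + q.2 i := by
        simp [EuclideanSpace.equiv]
      rw [h3] at h2
      have := hp i
      calc |q.1 i j| = |q.1 i j + q.2 i - q.2 i| := by ring_nf
        _ ≤ |q.1 i j + q.2 i| + |q.2 i| := abs_sub _ _
        _ ≤ |R| + |R| := add_le_add h2 this
        _ = 2*|R| := by ring
    rw [Metric.mem_closedBall, dist_zero_right, Prod.norm_def]
    apply max_le
    · rw [pi_norm_le_iff_of_nonneg (by linarith)]
      intro i
      rw [pi_norm_le_iff_of_nonneg (by linarith)]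
      intro j
      rw [Real.norm_eq_abs]
      linarith [hM i j]
    · rw [pi_norm_le_iff_of_nonneg (by linarith)]
      intro i
      rw [Real.norm_eq_abs]
      linarith [hp i]
  -- S contains a small ball matrix
  obtain ⟨q₀, hq₀⟩ : ∃ q₀, inS K q₀ ∧ (Matrix.of q₀.1).det = (ρ/2)^d := by
    refine ⟨(((ρ/2) • (1 : Matrix (Fin d) (Fin d) ℝ) : Matrix (Fin d) (Fin d) ℝ),
      (fun i => x₀ i : Fin d → ℝ)), ?_, ?_⟩
    · intro v hv
      have hmv : (Matrix.of ((ρ/2) • (1 : Matrix (Fin d) (Fin d) ℝ))).mulVec v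
          = (ρ/2) • (v : Fin d → ℝ) := by
        rw [show Matrix.of ((ρ/2) • (1 : Matrix (Fin d) (Fin d) ℝ))
          = (ρ/2) • (1 : Matrix (Fin d) (Fin d) ℝ) from rfl]
        rw [Matrix.smul_mulVec, Matrix.one_mulVec]
      apply hballK
      rw [Metric.mem_ball]
      have heq : (EuclideanSpace.equiv (Fin d) ℝ).symm
            ((Matrix.of ((ρ/2) • (1 : Matrix (Fin d) (Fin d) ℝ))).mulVec v
              + (fun i => x₀ i : Fin d → ℝ))
          = (ρ/2) • v + x₀ := by
        rw [hmv]; rfl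
      rw [heq]
      have : dist ((ρ/2) • v + x₀) x₀ = ‖(ρ/2) • v‖ := by
        rw [dist_eq_norm]; congr 1; abel
      rw [this, norm_smul, Real.norm_eq_abs, abs_of_pos (by linarith : (0:ℝ) < ρ/2)]
      calc ρ/2 * ‖v‖ ≤ ρ/2 * 1 := by
            apply mul_le_mul_of_nonneg_left hv (by linarith)
        _ < ρ := by linarith
    · rw [show Matrix.of ((ρ/2) • (1 : Matrix (Fin d) (Fin d) ℝ))
        = (ρ/2) • (1 : Matrix (Fin d) (Fin d) ℝ) from rfl]
      rw [Matrix.det_smul, Matrix.det_one]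
      simp
  -- compactness and maximum
  have hScompact : IsCompact {q : (Fin d → Fin d → ℝ) × (Fin d → ℝ) | inS K q} :=
    Metric.isCompact_of_isClosed_isBounded hSclosed hSbdd
  have hSne : {q : (Fin d → Fin d → ℝ) × (Fin d → ℝ) | inS K q}.Nonempty := ⟨q₀, hq₀.1⟩
  obtain ⟨qm, hqmS, hqmax⟩ := hScompact.exists_isMaxOn hSne
    ((Continuous.matrix_det (continuous_fst)).continuousOn)
  refine ⟨qm, hqmS, ?_, fun q' hq' => hqmax hq'⟩
  calc (0:ℝ) < (ρ/2)^d := by positivity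
    _ = (Matrix.of q₀.1).det := hq₀.2.symm
    _ ≤ (Matrix.of qm.1).det := hqmax hq₀.1

/-- Every convex body `K ⊆ ℝ^d` contains an ellipsoid of volume at least
`d^(-d) · Vol(K)`. -/
theorem exists_large_ellipsoid_in_convex_body {d : ℕ}
    (K : Set (EuclideanSpace ℝ (Fin d))) (hK : IsConvexBody K) :
    ∃ E, IsEllipsoid E ∧ E ⊆ K ∧
      ENNReal.ofReal ((d : ℝ) ^ (-(d : ℝ))) * volume K ≤ volume E := by
  obtain ⟨hKconv, hKcomp, hKint⟩ := hK
  rcases Nat.eq_zero_or_pos d with hd0 | hd1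
  · -- degenerate case d = 0
    subst hd0
    refine ⟨(AffineEquiv.refl ℝ (EuclideanSpace ℝ (Fin 0))) '' Metric.closedBall 0 1,
      ⟨AffineEquiv.refl ℝ _, rfl⟩, ?_, ?_⟩
    · intro y hy
      obtain ⟨x, hx⟩ := hKint
      have hxK : x ∈ K := interior_subset hx
      have : y = x := Subsingleton.elim y x
      rwa [this]
    · have huniv : (AffineEquiv.refl ℝ (EuclideanSpace ℝ (Fin 0))) '' Metric.closedBall 0 1
          = Set.univ := by
        apply Set.eq_univ_of_forall
        intro y
        refine ⟨y, ?_, rfl⟩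
        simp [Metric.mem_closedBall]
        have : y = 0 := Subsingleton.elim y 0
        simp [this]
      rw [huniv]
      have h1 : ((0:ℕ) : ℝ) ^ (-((0:ℕ) : ℝ)) = 1 := by norm_num
      rw [h1]
      simp only [ENNReal.ofReal_one, one_mul]
      exact measure_mono (Set.subset_univ K)
  · -- main case d ≥ 1
    obtain ⟨qm, hqmS, hqmdet, hqmax⟩ := exists_max_ellipsoid hKcomp hKint
    set M₀ : Matrix (Fin d) (Fin d) ℝ := Matrix.of qm.1 with hM₀
    have hdetpos : 0 < M₀.det := hqmdet
    set p₀ : EuclideanSpace ℝ (Fin d) := (EuclideanSpace.equiv (Fin d) ℝ).symm qm.2 with hp₀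
    haveI : Invertible M₀ := M₀.invertibleOfIsUnitDet (isUnit_iff_ne_zero.2 (ne_of_gt hdetpos))
    let e0 : (Fin d → ℝ) ≃ₗ[ℝ] (Fin d → ℝ) := M₀.toLinearEquiv' ‹_›
    let φ : EuclideanSpace ℝ (Fin d) ≃ₗ[ℝ] (Fin d → ℝ) :=
      (EuclideanSpace.equiv (Fin d) ℝ).toLinearEquiv
    let ℓ : EuclideanSpace ℝ (Fin d) ≃ₗ[ℝ] EuclideanSpace ℝ (Fin d) := φ ≪≫ₗ e0 ≪≫ₗ φ.symm
    let L : EuclideanSpace ℝ (Fin d) ≃ᵃ[ℝ] EuclideanSpace ℝ (Fin d) :=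
      ℓ.toAffineEquiv.trans (AffineEquiv.constVAdd ℝ _ p₀)
    have hℓ : ∀ y : EuclideanSpace ℝ (Fin d),
        ℓ y = (EuclideanSpace.equiv (Fin d) ℝ).symm (M₀.mulVec y) := by
      intro y
      show φ.symm (e0 (φ y)) = _
      congr 1
    have hL : ∀ y : EuclideanSpace ℝ (Fin d),
        L y = (EuclideanSpace.equiv (Fin d) ℝ).symm (M₀.mulVec y) + p₀ := by
      intro y
      show p₀ +ᵥ ℓ y = _
      rw [hℓ y]
      rw [vadd_eq_add, add_comm]
    -- the ellipsoid is in K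
    have hLK : L '' Metric.closedBall 0 1 ⊆ K := by
      rintro - ⟨v, hv, rfl⟩
      rw [hL v]
      have := hqmS v (by simpa [Metric.mem_closedBall, dist_zero_right] using hv)
      rw [map_add] at this
      exact this
    -- K is inside the d-dilated ellipsoid
    have hKL : K ⊆ L '' Metric.closedBall 0 (d:ℝ) := by
      intro z hz
      by_cases hnorm : ‖L.symm z‖ ≤ (d:ℝ)
      · exact ⟨L.symm z, by simpa [Metric.mem_closedBall, dist_zero_right] using hnorm,
          L.apply_symm_apply z⟩
      exfalso
      push_neg at hnorm
      set K' : Set (EuclideanSpace ℝ (Fin d)) := ⇑L ⁻¹' K with hK'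
      have hK'conv : Convex ℝ K' := by
        have := hKconv.affine_preimage (L : EuclideanSpace ℝ (Fin d) →ᵃ[ℝ] EuclideanSpace ℝ (Fin d))
        exact this
      have hB' : Metric.closedBall (0 : EuclideanSpace ℝ (Fin d)) 1 ⊆ K' := by
        intro v hv
        exact hLK ⟨v, hv, rfl⟩
      have hx' : L.symm z ∈ K' := by
        show L (L.symm z) ∈ K
        rwa [L.apply_symm_apply]
      obtain ⟨M, p, hMp, hMdet⟩ := john_improve hd1 hK'conv hB' hx' hnorm
      -- build the improved candidate in S
      have hq' : inS K (((M₀ * M : Matrix (Fin d) (Fin d) ℝ) : Fin d → Fin d → ℝ),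
          (M₀.mulVec (fun i => p i) + qm.2 : Fin d → ℝ)) := by
        intro v hv
        have h1 := hMp v hv
        have h2 : L ((EuclideanSpace.equiv (Fin d) ℝ).symm (M.mulVec v) + p) ∈ K := h1
        rw [hL] at h2
        show (EuclideanSpace.equiv (Fin d) ℝ).symm
            ((Matrix.of ((M₀ * M : Matrix (Fin d) (Fin d) ℝ) : Fin d → Fin d → ℝ)).mulVec v
              + (M₀.mulVec (fun i => p i) + qm.2)) ∈ K
        have e1 : (Matrix.of ((M₀ * M : Matrix (Fin d) (Fin d) ℝ) : Fin d → Fin d → ℝ)).mulVec v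
            = M₀.mulVec (M.mulVec v) := (Matrix.mulVec_mulVec v M₀ M).symm
        have e2 : (M₀.mulVec ((EuclideanSpace.equiv (Fin d) ℝ).symm (M.mulVec v) + p) : Fin d → ℝ)
            = M₀.mulVec (M.mulVec v) + M₀.mulVec (fun i => p i) := by
          exact Matrix.mulVec_add M₀ _ _
        have h3 : ∀ (A B : Fin d → ℝ), (EuclideanSpace.equiv (Fin d) ℝ).symm (A + B)
            = (EuclideanSpace.equiv (Fin d) ℝ).symm A + (EuclideanSpace.equiv (Fin d) ℝ).symm B :=
          fun A B => map_add _ A B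
        have heq : (EuclideanSpace.equiv (Fin d) ℝ).symm
            ((Matrix.of ((M₀ * M : Matrix (Fin d) (Fin d) ℝ) : Fin d → Fin d → ℝ)).mulVec v
              + (M₀.mulVec (fun i => p i) + qm.2))
            = (EuclideanSpace.equiv (Fin d) ℝ).symm
                (M₀.mulVec ((EuclideanSpace.equiv (Fin d) ℝ).symm (M.mulVec v) + p)) + p₀ := by
          rw [e1, h3, h3, e2, h3, hp₀]
          abel
        rw [heq]
        exact h2
      have hle := hqmax _ hq'
      have : (Matrix.of ((M₀ * M : Matrix (Fin d) (Fin d) ℝ) : Fin d → Fin d → ℝ)).det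
          = M₀.det * M.det := Matrix.det_mul M₀ M
      rw [this] at hle
      nlinarith
    -- volume of affine images
    have hvol : ∀ s : Set (EuclideanSpace ℝ (Fin d)),
        volume (⇑L '' s) = ENNReal.ofReal M₀.det * volume s := by
      intro s
      have himg : ⇑L '' s = (fun y => p₀ + y) '' (⇑ℓ '' s) := by
        rw [← Set.image_comp]
        apply Set.image_congr
        intro y _
        show L y = p₀ + ℓ y
        rw [hL, hℓ]
        rw [add_comm]
      rw [himg, Set.image_add_left, measure_preimage_add]
      have hdet : LinearMap.det (ℓ : EuclideanSpace ℝ (Fin d) →ₗ[ℝ] EuclideanSpace ℝ (Fin d))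
          = M₀.det := by
        have hconj : (ℓ : EuclideanSpace ℝ (Fin d) →ₗ[ℝ] EuclideanSpace ℝ (Fin d))
            = (φ.symm : (Fin d → ℝ) →ₗ[ℝ] EuclideanSpace ℝ (Fin d)) ∘ₗ
              (Matrix.toLin' M₀) ∘ₗ (φ.symm.symm : EuclideanSpace ℝ (Fin d) →ₗ[ℝ] (Fin d → ℝ)) := by
          apply LinearMap.ext
          intro y
          show ℓ y = φ.symm (Matrix.toLin' M₀ (φ y))
          rw [hℓ, Matrix.toLin'_apply]
          rfl
        rw [hconj, LinearMap.det_conj, LinearMap.det_toLin']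
      calc volume (⇑ℓ '' s)
          = volume (⇑(ℓ : EuclideanSpace ℝ (Fin d) →ₗ[ℝ] EuclideanSpace ℝ (Fin d)) '' s) := by
            congr 1
        _ = ENNReal.ofReal |LinearMap.det (ℓ : EuclideanSpace ℝ (Fin d) →ₗ[ℝ] EuclideanSpace ℝ (Fin d))| * volume s := by
            rw [Measure.addHaar_image_linearMap]
        _ = ENNReal.ofReal M₀.det * volume s := by
            rw [hdet, abs_of_pos hdetpos]
    -- finish with volume computation
    refine ⟨L '' Metric.closedBall 0 1, ⟨L, rfl⟩, hLK, ?_⟩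
    have hd1' : (0:ℝ) < (d:ℝ) := by exact_mod_cast hd1
    have hvol1 : volume (Metric.closedBall (0 : EuclideanSpace ℝ (Fin d)) 1)
        = volume (Metric.ball (0 : EuclideanSpace ℝ (Fin d)) 1) := by
      rw [Measure.addHaar_closedBall volume 0 (by norm_num : (0:ℝ) ≤ 1)]
      simp [finrank_euclideanSpace_fin]
    have hvold : volume (Metric.closedBall (0 : EuclideanSpace ℝ (Fin d)) (d:ℝ))
        = ENNReal.ofReal ((d:ℝ)^d) * volume (Metric.ball (0 : EuclideanSpace ℝ (Fin d)) 1) := by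
      rw [Measure.addHaar_closedBall volume 0 (le_of_lt hd1')]
      rw [finrank_euclideanSpace_fin]
    have hKvol : volume K ≤ ENNReal.ofReal ((d:ℝ)^d) * volume (⇑L '' Metric.closedBall 0 1) := by
      calc volume K ≤ volume (⇑L '' Metric.closedBall 0 (d:ℝ)) := measure_mono hKL
        _ = ENNReal.ofReal M₀.det * volume (Metric.closedBall (0:EuclideanSpace ℝ (Fin d)) (d:ℝ)) := hvol _
        _ = ENNReal.ofReal M₀.det * (ENNReal.ofReal ((d:ℝ)^d) * volume (Metric.ball (0:EuclideanSpace ℝ (Fin d)) 1)) := by rw [hvold]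
        _ = ENNReal.ofReal ((d:ℝ)^d) * (ENNReal.ofReal M₀.det * volume (Metric.ball (0:EuclideanSpace ℝ (Fin d)) 1)) := by ring
        _ = ENNReal.ofReal ((d:ℝ)^d) * (ENNReal.ofReal M₀.det * volume (Metric.closedBall (0:EuclideanSpace ℝ (Fin d)) 1)) := by rw [hvol1]
        _ = ENNReal.ofReal ((d:ℝ)^d) * volume (⇑L '' Metric.closedBall 0 1) := by rw [hvol]
    have hrpow : (d : ℝ) ^ (-(d : ℝ)) = ((d:ℝ)^(d:ℕ))⁻¹ := by
      rw [Real.rpow_neg (le_of_lt hd1'), Real.rpow_natCast]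
    rw [hrpow]
    calc ENNReal.ofReal (((d:ℝ)^(d:ℕ))⁻¹) * volume K
        ≤ ENNReal.ofReal (((d:ℝ)^(d:ℕ))⁻¹) * (ENNReal.ofReal ((d:ℝ)^d) * volume (⇑L '' Metric.closedBall 0 1)) :=
          by gcongr
      _ = (ENNReal.ofReal (((d:ℝ)^(d:ℕ))⁻¹) * ENNReal.ofReal ((d:ℝ)^d)) * volume (⇑L '' Metric.closedBall 0 1) := by
          rw [mul_assoc]
      _ = volume (L '' Metric.closedBall 0 1) := by
          rw [← ENNReal.ofReal_mul (by positivity)]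
          rw [inv_mul_cancel₀ (by positivity : ((d:ℝ)^(d:ℕ)) ≠ 0)]
          simp
end
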